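/- Let p be an odd prime, α, β integers with gcd(p,α) = gcd(p,β) = 1, and n, m ≥ 1 with 2m > n and n odd. Then the polynomial f(x) = pⁿ + pᵐβx + αx² is irreducible as an element of ℤ[[x]]. -/

import Mathlib

open PowerSeries

lemma stmt_6_key (p : ℕ) (hp : p.Prime) (α β : ℤ) (hα : ¬ (p:ℤ) ∣ α)
    (n m i j : ℕ) (hij : i < j) (hji : i + j = n) (hnm : n < 2*m) (hi : 1 ≤ i)
    (a0 b0 g1 h1 g2 h2 : ℤ) (ha : a0.natAbs = p ^ i) (hb : b0.natAbs = p ^ j)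
    (e1 : a0 * h1 + b0 * g1 = (p:ℤ) ^ m * β)
    (e2 : a0 * h2 + g1 * h1 + b0 * g2 = α) : False := by
  have him : i < m := by omega
  have hpa : (p:ℤ) ∣ a0 := by
    rw [← Int.natAbs_dvd_natAbs, ha]; exact_mod_cast dvd_pow_self p (by omega : i ≠ 0)
  have hpb : (p:ℤ) ∣ b0 := by
    rw [← Int.natAbs_dvd_natAbs, hb]; exact_mod_cast dvd_pow_self p (by omega : j ≠ 0)
  have h1' : ((p:ℤ)) ^ (i+1) ∣ a0 * h1 := by
    have d1 : ((p:ℤ)) ^ (i+1) ∣ (p:ℤ) ^ m * β := Dvd.dvd.mul_right (pow_dvd_pow _ (by omega)) β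
    have d2 : ((p:ℤ)) ^ (i+1) ∣ b0 * g1 := by
      have : ((p:ℤ)) ^ (i+1) ∣ b0 := by
        rw [← Int.natAbs_dvd_natAbs, Int.natAbs_pow, Int.natAbs_natCast, hb]
        exact_mod_cast pow_dvd_pow p (by omega)
      exact this.mul_right g1
    have : a0 * h1 = (p:ℤ) ^ m * β - b0 * g1 := by linarith
    rw [this]; exact dvd_sub d1 d2
  have hph1 : (p:ℤ) ∣ h1 := by
    have hpne : ((p:ℤ)) ^ i ≠ 0 := pow_ne_zero _ (by exact_mod_cast hp.ne_zero)
    rcases Int.natAbs_eq a0 with h | h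
    · rw [h, ha] at h1'
      push_cast at h1'
      rw [pow_succ, mul_comm ((p:ℤ)^i) (p:ℤ)] at h1'
      rcases h1' with ⟨c, hc⟩
      refine ⟨c, ?_⟩
      have : (p:ℤ)^i * h1 = (p:ℤ)^i * ((p:ℤ) * c) := by rw [hc]; ring
      exact mul_left_cancel₀ hpne this
    · rw [h, ha] at h1'
      push_cast at h1'
      rw [pow_succ, mul_comm ((p:ℤ)^i) (p:ℤ)] at h1'
      rcases h1' with ⟨c, hc⟩
      refine ⟨-c, ?_⟩
      have : (p:ℤ)^i * h1 = (p:ℤ)^i * ((p:ℤ) * -c) := by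
        have : -((p:ℤ)^i) * h1 = (p:ℤ) * (p:ℤ)^i * c := hc
        linarith [this]
      exact mul_left_cancel₀ hpne this
  have : (p:ℤ) ∣ α := by
    rw [← e2]
    exact dvd_add (dvd_add (hpa.mul_right _) (hph1.mul_left _)) (hpb.mul_right _)
  exact hα this

theorem stmt_6 (p : ℕ) (hp : p.Prime) (hodd : Odd p) (α β : ℤ)
    (hα : Int.gcd (p : ℤ) α = 1) (hβ : Int.gcd (p : ℤ) β = 1)
    (n m : ℕ) (hn : 1 ≤ n) (hm : 1 ≤ m) (h : n < 2 * m) (hnodd : Odd n) :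
    Irreducible ((PowerSeries.C (R := ℤ)) ((p : ℤ) ^ n) +
      (PowerSeries.C (R := ℤ)) ((p : ℤ) ^ m * β) * PowerSeries.X +
      (PowerSeries.C (R := ℤ)) α * PowerSeries.X ^ 2) := by
  have hpZ : Prime (p:ℤ) := Nat.prime_iff_prime_int.mp hp
  have hpα : ¬ (p:ℤ) ∣ α := fun hd =>
    hpZ.not_isUnit (((Int.isCoprime_iff_gcd_eq_one).2 hα).isUnit_of_dvd' dvd_rfl hd)
  set f := (PowerSeries.C (R := ℤ)) ((p : ℤ) ^ n) +
      (PowerSeries.C (R := ℤ)) ((p : ℤ) ^ m * β) * PowerSeries.X +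
      (PowerSeries.C (R := ℤ)) α * PowerSeries.X ^ 2 with hfdef
  have c0 : constantCoeff (R := ℤ) f = (p:ℤ)^n := by simp [hfdef]
  have c1 : coeff (R := ℤ) 1 f = (p:ℤ)^m * β := by
    simp only [hfdef, map_add, PowerSeries.coeff_C_mul, PowerSeries.coeff_C,
      PowerSeries.coeff_X, PowerSeries.coeff_X_pow]
    norm_num
  have c2 : coeff (R := ℤ) 2 f = α := by
    simp only [hfdef, map_add, PowerSeries.coeff_C_mul, PowerSeries.coeff_C,
      PowerSeries.coeff_X, PowerSeries.coeff_X_pow]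
    norm_num
  constructor
  · intro hu
    have := PowerSeries.isUnit_constantCoeff f hu
    rw [c0] at this
    exact hpZ.not_isUnit ((isUnit_pow_iff (by omega : n ≠ 0)).1 this)
  · intro g h' hf
    have e0 : constantCoeff (R := ℤ) g * constantCoeff (R := ℤ) h' = (p:ℤ)^n := by
      rw [← map_mul, ← hf, c0]
    have e1 : constantCoeff (R := ℤ) g * coeff (R := ℤ) 1 h' + constantCoeff (R := ℤ) h' * coeff (R := ℤ) 1 g
        = (p:ℤ)^m * β := by
      rw [← c1, hf, PowerSeries.coeff_mul, Finset.Nat.sum_antidiagonal_eq_sum_range_succ_mk]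
      simp [Finset.sum_range_succ]
      ring
    have e2 : constantCoeff (R := ℤ) g * coeff (R := ℤ) 2 h' + coeff (R := ℤ) 1 g * coeff (R := ℤ) 1 h'
        + constantCoeff (R := ℤ) h' * coeff (R := ℤ) 2 g = α := by
      rw [← c2, hf, PowerSeries.coeff_mul, Finset.Nat.sum_antidiagonal_eq_sum_range_succ_mk]
      simp [Finset.sum_range_succ]
      ring
    -- natAbs analysis
    have hdg : (constantCoeff (R := ℤ) g).natAbs ∣ p ^ n := by
      have : (constantCoeff (R := ℤ) g).natAbs ∣ ((p:ℤ)^n).natAbs :=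
        Int.natAbs_dvd_natAbs.2 ⟨_, e0.symm⟩
      simpa only [Int.natAbs_pow, Int.natAbs_natCast] using this
    have hdh : (constantCoeff (R := ℤ) h').natAbs ∣ p ^ n := by
      have : (constantCoeff (R := ℤ) h').natAbs ∣ ((p:ℤ)^n).natAbs :=
        Int.natAbs_dvd_natAbs.2 ⟨_, by rw [← e0]; ring⟩
      simpa only [Int.natAbs_pow, Int.natAbs_natCast] using this
    obtain ⟨i, hi_le, hi⟩ := (Nat.dvd_prime_pow hp).1 hdg
    obtain ⟨j, hj_le, hj⟩ := (Nat.dvd_prime_pow hp).1 hdh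
    have hijn : i + j = n := by
      have : p ^ i * p ^ j = p ^ n := by
        rw [← hi, ← hj, ← Int.natAbs_mul, e0, Int.natAbs_pow, Int.natAbs_natCast]
      rw [← pow_add] at this
      exact Nat.pow_right_injective hp.two_le this
    by_cases hi0 : i = 0
    · left
      rw [PowerSeries.isUnit_iff_constantCoeff]
      rw [Int.isUnit_iff_natAbs_eq, hi, hi0, pow_zero]
    by_cases hj0 : j = 0
    · right
      rw [PowerSeries.isUnit_iff_constantCoeff]
      rw [Int.isUnit_iff_natAbs_eq, hj, hj0, pow_zero]
    exfalso
    have hij : i ≠ j := by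
      intro hij
      rw [hij] at hijn
      exact (Nat.odd_iff.1 hnodd).symm.trans_ne (by omega) rfl |>.elim
    rcases lt_or_gt_of_ne hij with hlt | hlt
    · exact stmt_6_key p hp α β hpα n m i j hlt hijn h (by omega)
        (constantCoeff (R := ℤ) g) (constantCoeff (R := ℤ) h') (coeff (R := ℤ) 1 g) (coeff (R := ℤ) 1 h')
        (coeff (R := ℤ) 2 g) (coeff (R := ℤ) 2 h') hi hj (by linarith [e1]) (by linarith [e2])
    · exact stmt_6_key p hp α β hpα n m j i hlt (by omega) h (by omega)
        (constantCoeff (R := ℤ) h') (constantCoeff (R := ℤ) g) (coeff (R := ℤ) 1 h') (coeff (R := ℤ) 1 g)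
        (coeff (R := ℤ) 2 h') (coeff (R := ℤ) 2 g) hj hi (by linarith [e1]) (by linarith [e2])
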